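/- (Utility loss bound with separate numerator and denominator noises) Let t_1 < … < t_M be event times with counts n_i > 0 and 0 ≤ d_i ≤ n_i, and let ε_{d,i} and ε_{n,i} be real noises with n_i + ε_{n,i} > 0 and 0 ≤ (d_i + ε_{d,i})/(n_i + ε_{n,i}) ≤ 1 for all i. Then for every t, |∏_{t_i ≤ t} (1 − d_i/n_i) − ∏_{t_i ≤ t} (1 − (d_i + ε_{d,i})/(n_i + ε_{n,i}))| ≤ ∑_{t_i ≤ t} |ε_{d,i}·n_i − d_i·ε_{n,i}| / (n_i·(n_i + ε_{n,i})). -/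
import Mathlib


open Finset

theorem prod_diff_le_sum {ι : Type*} (s : Finset ι) (f g : ι → ℝ)
    (hf0 : ∀ i, 0 ≤ f i) (hf1 : ∀ i, f i ≤ 1)
    (hg0 : ∀ i, 0 ≤ g i) (hg1 : ∀ i, g i ≤ 1) :
    |∏ i ∈ s, f i - ∏ i ∈ s, g i| ≤ ∑ i ∈ s, |f i - g i| := by
  induction s using Finset.cons_induction with
  | empty => simp
  | cons a s ha ih =>
    rw [Finset.prod_cons, Finset.prod_cons, Finset.sum_cons]
    have h1 : f a * ∏ i ∈ s, f i - g a * ∏ i ∈ s, g i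
        = f a * (∏ i ∈ s, f i - ∏ i ∈ s, g i) + (f a - g a) * ∏ i ∈ s, g i := by ring
    rw [h1]
    calc |f a * (∏ i ∈ s, f i - ∏ i ∈ s, g i) + (f a - g a) * ∏ i ∈ s, g i|
        ≤ |f a * (∏ i ∈ s, f i - ∏ i ∈ s, g i)| + |(f a - g a) * ∏ i ∈ s, g i| :=
          abs_add_le _ _
      _ = |f a| * |∏ i ∈ s, f i - ∏ i ∈ s, g i| + |f a - g a| * |∏ i ∈ s, g i| := by
          rw [abs_mul, abs_mul]
      _ ≤ 1 * |∏ i ∈ s, f i - ∏ i ∈ s, g i| + |f a - g a| * 1 := by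
          gcongr
          · rw [abs_of_nonneg (hf0 a)]; exact hf1 a
          · rw [abs_of_nonneg (Finset.prod_nonneg fun i _ => hg0 i)]
            exact Finset.prod_le_one (fun i _ => hg0 i) (fun i _ => hg1 i)
      _ = |∏ i ∈ s, f i - ∏ i ∈ s, g i| + |f a - g a| := by ring
      _ ≤ (∑ i ∈ s, |f i - g i|) + |f a - g a| := by gcongr
      _ = |f a - g a| + ∑ i ∈ s, |f i - g i| := by ring

/-- Utility loss bound with separate numerator and denominator noises:
`|∏ (1 − d_i/n_i) − ∏ (1 − (d_i + ε_{d,i})/(n_i + ε_{n,i}))|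
  ≤ ∑ |ε_{d,i}·n_i − d_i·ε_{n,i}| / (n_i·(n_i + ε_{n,i}))`. -/
theorem utility_loss_bound_separate_noises (M : ℕ) (τ d n εd εn : Fin M → ℝ)
    (hτ : StrictMono τ) (hn : ∀ i, 0 < n i) (hd0 : ∀ i, 0 ≤ d i)
    (hdn : ∀ i, d i ≤ n i) (hnεn : ∀ i, 0 < n i + εn i)
    (hratio0 : ∀ i, 0 ≤ (d i + εd i) / (n i + εn i))
    (hratio1 : ∀ i, (d i + εd i) / (n i + εn i) ≤ 1) (t : ℝ) :
    |(∏ i ∈ univ.filter (fun i => τ i ≤ t), (1 - d i / n i))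
        - ∏ i ∈ univ.filter (fun i => τ i ≤ t), (1 - (d i + εd i) / (n i + εn i))|
      ≤ ∑ i ∈ univ.filter (fun i => τ i ≤ t),
          |εd i * n i - d i * εn i| / (n i * (n i + εn i)) := by
  have key := prod_diff_le_sum (univ.filter (fun i => τ i ≤ t))
      (fun i => 1 - d i / n i) (fun i => 1 - (d i + εd i) / (n i + εn i))
      (fun i => by
        have := div_le_one_of_le₀ (hdn i) (hn i).le; linarith)
      (fun i => by
        have := div_nonneg (hd0 i) (hn i).le; linarith)
      (fun i => by have := hratio1 i; linarith)
      (fun i => by have := hratio0 i; linarith)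
  refine key.trans_eq (Finset.sum_congr rfl fun i _ => ?_)
  have hni := (hn i).ne'
  have hne := (hnεn i).ne'
  rw [show (1 - d i / n i) - (1 - (d i + εd i) / (n i + εn i))
      = (εd i * n i - d i * εn i) / (n i * (n i + εn i)) by
    field_simp; ring]
  rw [abs_div, abs_of_pos (mul_pos (hn i) (hnεn i))]
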